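/- Let a, b ≥ 2 be coprime natural numbers. The set of natural numbers m ≥ 1 with ℓ(a,b,m) = 0 is finite and has exactly a·b − (a−1)(b−1)/2 elements. (Here (a−1)(b−1) is even since a and b are coprime.) -/

import Mathlib

/-- `ell a b m` is the number of pairs `(i, j)` of positive integers with `m = a * i + b * j`. -/
noncomputable def ell (a b m : ℕ) : ℕ :=
  {p : ℕ × ℕ | 0 < p.1 ∧ 0 < p.2 ∧ m = a * p.1 + b * p.2}.ncard


def PosRep (a b m : ℕ) : Prop := ∃ i j : ℕ, 0 < i ∧ 0 < j ∧ m = a * i + b * j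

lemma ell_eq_zero_iff (a b m : ℕ) (ha : 1 ≤ a) (hb : 1 ≤ b) :
    ell a b m = 0 ↔ ¬ PosRep a b m := by
  have hfin : {p : ℕ × ℕ | 0 < p.1 ∧ 0 < p.2 ∧ m = a * p.1 + b * p.2}.Finite := by
    apply Set.Finite.subset (Set.finite_Icc (1,1) (m,m))
    rintro ⟨i, j⟩ ⟨hi, hj, hm⟩
    simp only [Set.mem_Icc, Prod.mk_le_mk]
    refine ⟨⟨hi, hj⟩, ?_, ?_⟩ <;> nlinarith
  rw [ell, Set.ncard_eq_zero hfin, Set.eq_empty_iff_forall_notMem]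
  constructor
  · rintro h ⟨i, j, hi, hj, hm⟩
    exact h (i, j) ⟨hi, hj, hm⟩
  · rintro h ⟨i, j⟩ ⟨hi, hj, hm⟩
    exact h ⟨i, j, hi, hj, hm⟩

lemma exists_x (a b m : ℕ) (hb : 2 ≤ b) (hab : Nat.gcd a b = 1) :
    ∃ x, 1 ≤ x ∧ x ≤ b ∧ a * x ≡ m [MOD b] := by
  obtain ⟨x1, -, hx1⟩ := Nat.exists_mul_mod_eq_one_of_coprime hab (by omega)
  have h1 : a * x1 ≡ 1 [MOD b] := by
    unfold Nat.ModEq; rw [hx1, Nat.mod_eq_of_lt (by omega)]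
  set x0 := x1 * m % b with hx0
  have hx0lt : x0 < b := Nat.mod_lt _ (by omega)
  have hcong : a * x0 ≡ m [MOD b] := by
    calc a * x0 ≡ a * (x1 * m) [MOD b] := Nat.ModEq.mul_left a (Nat.mod_modEq _ _)
    _ = (a * x1) * m := by ring
    _ ≡ 1 * m [MOD b] := Nat.ModEq.mul_right m h1
    _ = m := by ring
  by_cases h0 : x0 = 0
  · refine ⟨b, by omega, le_refl b, ?_⟩
    have hb0 : a * b ≡ a * x0 [MOD b] := by
      rw [h0, Nat.mul_zero]
      exact Nat.modEq_zero_iff_dvd.mpr ⟨a, by ring⟩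
    exact hb0.trans hcong
  · exact ⟨x0, by omega, by omega, hcong⟩

lemma posRep_iff (a b m x : ℕ) (ha : 2 ≤ a) (hb : 2 ≤ b) (hab : Nat.gcd a b = 1)
    (hx1 : 1 ≤ x) (hxb : x ≤ b) (hc : a * x ≡ m [MOD b]) :
    PosRep a b m ↔ a * x + b ≤ m := by
  constructor
  · rintro ⟨i, j, hi, hj, rfl⟩
    have hci : a * x ≡ a * i [MOD b] := by
      refine hc.trans ?_
      have h0 : a * i + b * j ≡ a * i + 0 [MOD b] :=
        Nat.ModEq.add_left _ (Nat.modEq_zero_iff_dvd.mpr ⟨j, rfl⟩)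
      simpa using h0
    have hxi : x ≡ i [MOD b] := hci.cancel_left_of_coprime (by rwa [Nat.gcd_comm])
    have hxile : x ≤ i := by
      by_contra hlt
      push_neg at hlt
      have hdvd : b ∣ x - i := (Nat.modEq_iff_dvd' (le_of_lt hlt)).mp hxi.symm
      have := Nat.le_of_dvd (by omega) hdvd
      omega
    nlinarith
  · intro hle
    have hdvd : b ∣ m - a * x := (Nat.modEq_iff_dvd' (by omega)).mp hc
    obtain ⟨j, hj⟩ := hdvd
    refine ⟨x, j, by omega, ?_, by omega⟩
    by_contra hj0
    push_neg at hj0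
    interval_cases j <;> omega

lemma flip_lemma (a b m : ℕ) (ha : 2 ≤ a) (hb : 2 ≤ b) (hab : Nat.gcd a b = 1)
    (h1 : 1 ≤ m) (h2 : m ≤ a * b + a + b - 1) :
    PosRep a b (a * b + a + b - m) ↔ ¬ PosRep a b m := by
  obtain ⟨x, hx1, hxb, hc⟩ := exists_x a b m hb hab
  have hcd : (b : ℤ) ∣ (m : ℤ) - (a : ℤ) * x := by
    have h := (Nat.modEq_iff_dvd (n := b)).mp hc
    push_cast at h
    exact h
  have hx'c : a * (b + 1 - x) ≡ (a * b + a + b - m) [MOD b] := by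
    rw [Nat.modEq_iff_dvd]
    obtain ⟨k, hk⟩ := hcd
    refine ⟨1 - k, ?_⟩
    push_cast [Nat.cast_sub (by omega : x ≤ b + 1), Nat.cast_sub (by omega : m ≤ a*b+a+b)]
    linear_combination -hk
  have key1 := posRep_iff a b m x ha hb hab hx1 hxb hc
  have key2 := posRep_iff a b (a*b+a+b-m) (b+1-x) ha hb hab (by omega) (by omega) hx'c
  rw [key1, key2]
  have hax2 : a * x ≤ a * b := Nat.mul_le_mul_left a hxb
  have hax : a * (b + 1 - x) = a * b + a - a * x := by
    zify [show x ≤ b + 1 by omega, show a * x ≤ a * b + a by omega]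
    ring
  have hsp : m ≤ a * x ∨ a * x + b ≤ m := by
    rcases le_or_gt m (a * x) with h | h
    · exact Or.inl h
    · right
      have hdvd : b ∣ m - a * x := (Nat.modEq_iff_dvd' (le_of_lt h)).mp hc
      have := Nat.le_of_dvd (by omega) hdvd
      omega
  rw [hax]
  omega

lemma posRep_of_big (a b m : ℕ) (ha : 2 ≤ a) (hb : 2 ≤ b) (hab : Nat.gcd a b = 1)
    (hm : a * b + a + b ≤ m) : PosRep a b m := by
  obtain ⟨x, hx1, hxb, hc⟩ := exists_x a b m hb hab
  rw [posRep_iff a b m x ha hb hab hx1 hxb hc]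
  have : a * x ≤ a * b := Nat.mul_le_mul_left a hxb
  omega

lemma arith_lemma (a b T : ℕ) (ha : 2 ≤ a) (hb : 2 ≤ b) (hpar : 2 ∣ (a-1)*(b-1))
    (h : 2 * T = a * b + a + b - 1) : T = a * b - (a-1)*(b-1)/2 := by
  obtain ⟨c, rfl⟩ : ∃ c, a = c + 2 := ⟨a-2, by omega⟩
  obtain ⟨d, rfl⟩ : ∃ d, b = d + 2 := ⟨b-2, by omega⟩
  have e1 : c + 2 - 1 = c + 1 := by omega
  have e2 : d + 2 - 1 = d + 1 := by omega
  rw [e1, e2] at hpar ⊢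
  have h1 : (c+2)*(d+2) = c*d + 2*c + 2*d + 4 := by ring
  have h2 : (c+1)*(d+1) = c*d + c + d + 1 := by ring
  rw [h1] at h ⊢
  rw [h2] at hpar ⊢
  obtain ⟨k, hk⟩ := hpar
  generalize c * d = e at h hk ⊢
  omega

theorem card_gaps_eq (a b : ℕ) (ha : 2 ≤ a) (hb : 2 ≤ b)
    (hab : Nat.gcd a b = 1) :
    {m : ℕ | 1 ≤ m ∧ ell a b m = 0}.Finite ∧
      {m : ℕ | 1 ≤ m ∧ ell a b m = 0}.ncard = a * b - (a - 1) * (b - 1) / 2 := by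
  classical
  set N := a * b + a + b with hN
  set I : Finset ℕ := Finset.Ico 1 N with hI
  set T : Finset ℕ := I.filter (fun m => ¬ PosRep a b m) with hT
  have hST : {m : ℕ | 1 ≤ m ∧ ell a b m = 0} = ↑T := by
    ext m
    simp only [Set.mem_setOf_eq, Finset.coe_filter, hT, hI, Finset.mem_Ico,
      ell_eq_zero_iff a b m (by omega) (by omega)]
    constructor
    · rintro ⟨h1, h2⟩
      refine ⟨⟨h1, ?_⟩, h2⟩
      by_contra hge
      push_neg at hge
      exact h2 (posRep_of_big a b m ha hb hab hge)
    · rintro ⟨⟨h1, _⟩, h2⟩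
      exact ⟨h1, h2⟩
  have hfin : {m : ℕ | 1 ≤ m ∧ ell a b m = 0}.Finite := by
    rw [hST]; exact T.finite_toSet
  refine ⟨hfin, ?_⟩
  rw [hST, Set.ncard_coe_finset]
  -- bijection between non-representable and representable in I
  have hcards : T.card = (I.filter (fun m => PosRep a b m)).card := by
    apply Finset.card_bij' (fun m _ => N - m) (fun m _ => N - m)
    · intro m hm
      simp only [hT, hI, Finset.mem_filter, Finset.mem_Ico] at hm ⊢
      obtain ⟨⟨hm1, hm2⟩, hm3⟩ := hm
      refine ⟨⟨by omega, by omega⟩, ?_⟩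
      exact (flip_lemma a b m ha hb hab hm1 (by omega)).mpr hm3
    · intro m hm
      simp only [hT, hI, Finset.mem_filter, Finset.mem_Ico] at hm ⊢
      obtain ⟨⟨hm1, hm2⟩, hm3⟩ := hm
      refine ⟨⟨by omega, by omega⟩, ?_⟩
      have := flip_lemma a b (N - m) ha hb hab (by omega) (by omega)
      rw [show N - (N - m) = m by omega] at this
      exact this.mp hm3
    · intro m hm
      simp only [hT, hI, Finset.mem_filter, Finset.mem_Ico] at hm
      omega
    · intro m hm
      simp only [hI, Finset.mem_filter, Finset.mem_Ico] at hm
      omega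
  have htot : (I.filter (fun m => PosRep a b m)).card + T.card = I.card := by
    rw [hT]
    exact Finset.card_filter_add_card_filter_not _
  have hIcard : I.card = N - 1 := by rw [hI, Nat.card_Ico]
  have hpar : 2 ∣ (a - 1) * (b - 1) := by
    have h2 : ¬ (2 ∣ a ∧ 2 ∣ b) := by
      rintro ⟨p, q⟩
      have := Nat.dvd_gcd p q
      omega
    rcases Nat.even_or_odd a with he | ho
    · have hbo : ¬ (2 ∣ b) := fun q => h2 ⟨he.two_dvd, q⟩
      have : 2 ∣ b - 1 := by omega
      exact Dvd.dvd.mul_left this _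
    · obtain ⟨k, hk⟩ := ho
      have : 2 ∣ a - 1 := ⟨k, by omega⟩
      exact Dvd.dvd.mul_right this _
  exact arith_lemma a b T.card ha hb hpar (by omega)
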